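/- arXiv:2601.22672 — 2 statements merged into one kernel-verified Lean document; each statement's English description precedes it below -/
import Mathlib

section
/- Along any trajectory of the closed-loop SRB system, the storage function V = (1/2) vᵀ M_d v + (1/2) k_p ‖p_e‖² + 2 k_o (1 − η_e) satisfies V̇(t) ≤ − v(t)ᵀ D_d v(t) + v(t)ᵀ F_h(t) for all t; that is, the robot generalized velocity v and the human force F_h form a strictly passive pair (Theorem 1, statement 1). -/
open Matrix

lemma hasDerivAt_dot' {n : ℕ} {f g : ℝ → Fin n → ℝ} {f' g' : Fin n → ℝ} {t : ℝ}
    (hf : HasDerivAt f f' t) (hg : HasDerivAt g g' t) :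
    HasDerivAt (fun s => f s ⬝ᵥ g s) (f' ⬝ᵥ g t + f t ⬝ᵥ g') t := by
  have h := HasDerivAt.fun_sum (fun i (_ : i ∈ Finset.univ) =>
    ((hasDerivAt_pi.1 hf i).mul (hasDerivAt_pi.1 hg i)))
  simp only [dotProduct]
  rw [← Finset.sum_add_distrib]
  exact h

lemma hasDerivAt_mulVec' {n : ℕ} {A : Matrix (Fin n) (Fin n) ℝ} {g : ℝ → Fin n → ℝ}
    {g' : Fin n → ℝ} {t : ℝ} (hg : HasDerivAt g g' t) :
    HasDerivAt (fun s => A.mulVec (g s)) (A.mulVec g') t := by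
  refine hasDerivAt_pi.2 fun i => ?_
  have h := HasDerivAt.fun_sum (fun j (_ : j ∈ Finset.univ) =>
    ((hasDerivAt_pi.1 hg j).const_mul (A i j)))
  simpa [mulVec, dotProduct] using h

lemma dot_append' (a b c d : Fin 3 → ℝ) :
    Fin.append a b ⬝ᵥ Fin.append c d = a ⬝ᵥ c + b ⬝ᵥ d := by
  simp only [dotProduct]
  rw [Fin.sum_univ_add (f := fun i : Fin (3+3) => Fin.append a b i * Fin.append c d i)]
  simp [Fin.append, Fin.addCases, Fin.natAdd, Fin.addNat]

lemma dot_self_nonneg' {n : ℕ} (a : Fin n → ℝ) : 0 ≤ a ⬝ᵥ a :=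
  Finset.sum_nonneg fun i _ => mul_self_nonneg _

/-- along any trajectory of the closed-loop SRB system,
the storage function
`V = (1/2) vᵀ M_d v + (1/2) k_p ‖p_e‖² + 2 k_o (1 − η_e)` satisfies
`V̇(t) ≤ −v(t)ᵀ D_d v(t) + v(t)ᵀ F_h(t)` for all `t`; i.e. the robot
generalized velocity `v` and the human force `F_h` form a strictly passive
pair (Theorem 1, statement 1).  Squared Euclidean norms are written via dot
products and `v = (ṗ, ω) ∈ ℝ⁶`. -/
theorem storage_function_passivity
    (Md Dd : Matrix (Fin 6) (Fin 6) ℝ) (kp ko kr : ℝ) (f : ℝ → ℝ)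
    (Fh : ℝ → Fin 6 → ℝ)
    (p pg ω εe pdot : ℝ → Fin 3 → ℝ) (ηe : ℝ → ℝ)
    (Re : ℝ → Matrix (Fin 3) (Fin 3) ℝ)
    (v vdot : ℝ → Fin 6 → ℝ)
    (hMd : Md.PosDef) (hDd : Dd.PosDef)
    (hkp : 0 < kp) (hko : 0 < ko) (hkr : 0 < kr)
    (hf : ∀ t : ℝ, f t ∈ Set.Icc (0:ℝ) 1)
    (hRe : ∀ t : ℝ, (Re t)ᵀ * Re t = 1)
    (hRedet : ∀ t : ℝ, (Re t).det = 1)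
    -- `v = (ṗ, ω)`:
    (hp : ∀ t : ℝ, HasDerivAt p (pdot t) t)
    (hv : ∀ t : ℝ, v t = Fin.append (pdot t) (ω t))
    (hvdot : ∀ t : ℝ, HasDerivAt v (vdot t) t)
    -- (i) admittance model with `u_c = (k_p p_e, k_o R_eᵀ ε_e)`:
    (hadm : ∀ t : ℝ,
      Md.mulVec (vdot t) + Dd.mulVec (v t) =
        Fh t + Fin.append (kp • (pg t - p t)) (ko • (Re t)ᵀ.mulVec (εe t)))
    -- (ii) god-object dynamics:
    (hpg : ∀ t : ℝ, HasDerivAt pg ((-(kr * f t)) • (pg t - p t)) t)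
    -- (iii) quaternion-error kinematics, with `ω_g = −k_r f ε_e`:
    (hηe : ∀ t : ℝ, HasDerivAt ηe
      (-(1 / 2) * (εe t ⬝ᵥ ((-(kr * f t)) • εe t - (Re t).mulVec (ω t)))) t) :
    ∀ t : ℝ,
      DifferentiableAt ℝ (fun s : ℝ =>
          (1 / 2) * (v s ⬝ᵥ Md.mulVec (v s)) +
            (1 / 2) * kp * ((pg s - p s) ⬝ᵥ (pg s - p s)) +
            2 * ko * (1 - ηe s)) t ∧
      deriv (fun s : ℝ =>
          (1 / 2) * (v s ⬝ᵥ Md.mulVec (v s)) +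
            (1 / 2) * kp * ((pg s - p s) ⬝ᵥ (pg s - p s)) +
            2 * ko * (1 - ηe s)) t ≤
        -(v t ⬝ᵥ Dd.mulVec (v t)) + v t ⬝ᵥ Fh t := by
  intro t
  set Pe : Fin 3 → ℝ := pg t - p t with hPe
  set pe' : Fin 3 → ℝ := (-(kr * f t)) • Pe - pdot t with hpe'
  have hpedot : HasDerivAt (fun s => pg s - p s) pe' t := (hpg t).sub (hp t)
  have h1 : HasDerivAt (fun s => (1 / 2) * (v s ⬝ᵥ Md.mulVec (v s)))
      ((1 / 2) * (vdot t ⬝ᵥ Md.mulVec (v t) + v t ⬝ᵥ Md.mulVec (vdot t))) t :=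
    (hasDerivAt_dot' (hvdot t) (hasDerivAt_mulVec' (hvdot t))).const_mul _
  have h2 : HasDerivAt (fun s => (1 / 2) * kp * ((pg s - p s) ⬝ᵥ (pg s - p s)))
      ((1 / 2) * kp * (pe' ⬝ᵥ Pe + Pe ⬝ᵥ pe')) t :=
    (hasDerivAt_dot' hpedot hpedot).const_mul _
  have h3 : HasDerivAt (fun s => 2 * ko * (1 - ηe s))
      (2 * ko * (0 - (-(1 / 2) * (εe t ⬝ᵥ ((-(kr * f t)) • εe t - (Re t).mulVec (ω t)))))) t :=
    ((hasDerivAt_const t (1 : ℝ)).sub (hηe t)).const_mul _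
  have hV := (h1.fun_add h2).fun_add h3
  refine ⟨hV.differentiableAt, ?_⟩
  rw [hV.deriv]
  -- symmetry of Md
  have hsym : Mdᵀ = Md := by
    have := hMd.isHermitian
    simpa [Matrix.IsHermitian, Matrix.conjTranspose_eq_transpose_of_trivial] using this
  have hv1 : vdot t ᵥ* Md = Md *ᵥ vdot t := by
    conv_lhs => rw [← hsym, vecMul_transpose]
  have hMd' : vdot t ⬝ᵥ Md.mulVec (v t) = v t ⬝ᵥ Md.mulVec (vdot t) := by
    rw [dotProduct_mulVec, hv1, dotProduct_comm]
  have heq : Md.mulVec (vdot t) =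
      Fh t + Fin.append (kp • Pe) (ko • (Re t)ᵀ.mulVec (εe t)) - Dd.mulVec (v t) :=
    eq_sub_of_add_eq (hadm t)
  have hω : ω t ⬝ᵥ (ko • (Re t)ᵀ.mulVec (εe t)) = ko * (εe t ⬝ᵥ (Re t).mulVec (ω t)) := by
    rw [dotProduct_smul, smul_eq_mul, dotProduct_mulVec, vecMul_transpose, dotProduct_comm]
  have e1 : v t ⬝ᵥ Md.mulVec (vdot t) =
      v t ⬝ᵥ Fh t + (kp * (pdot t ⬝ᵥ Pe) + ko * (εe t ⬝ᵥ (Re t).mulVec (ω t)))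
        - v t ⬝ᵥ Dd.mulVec (v t) := by
    rw [heq, dotProduct_sub, dotProduct_add]
    congr 1
    congr 1
    conv_lhs => rw [hv t]
    rw [dot_append', hω, dotProduct_smul, smul_eq_mul]
  have e2 : pe' ⬝ᵥ Pe = -(kr * f t) * (Pe ⬝ᵥ Pe) - pdot t ⬝ᵥ Pe := by
    rw [hpe', sub_dotProduct, smul_dotProduct, smul_eq_mul]
  have e2' : Pe ⬝ᵥ pe' = -(kr * f t) * (Pe ⬝ᵥ Pe) - pdot t ⬝ᵥ Pe := by
    rw [hpe', dotProduct_sub, dotProduct_smul, smul_eq_mul, dotProduct_comm Pe (pdot t)]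
  have e3 : εe t ⬝ᵥ ((-(kr * f t)) • εe t - (Re t).mulVec (ω t)) =
      -(kr * f t) * (εe t ⬝ᵥ εe t) - εe t ⬝ᵥ (Re t).mulVec (ω t) := by
    rw [dotProduct_sub, dotProduct_smul, smul_eq_mul]
  rw [hMd', e1, e2, e2', e3]
  have hX : 0 ≤ Pe ⬝ᵥ Pe := dot_self_nonneg' _
  have hY : 0 ≤ εe t ⬝ᵥ εe t := dot_self_nonneg' _
  have hφ : 0 ≤ kr * f t := mul_nonneg hkr.le (hf t).1
  nlinarith [mul_nonneg (mul_nonneg hφ hkp.le) hX, mul_nonneg (mul_nonneg hφ hko.le) hY]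
end

section
/- Consider the closed-loop SRB system with the storage function V = (1/2) vᵀ M_d v + (1/2) k_p ‖p_e‖² + 2 k_o (1 − η_e), and assume additionally that D_d is constant symmetric positive definite, that η_e(t) ≤ 1 for all t (so V ≥ 0), and that the human force has bounded energy, i.e., ∫₀^∞ ‖F_h(t)‖² dt = E < ∞. Then for all t ≥ 0 one has V(t) ≤ V(0) + (λ_max(D_d⁻¹)/4) E < ∞; consequently ‖v(t)‖, ‖p_e(t)‖ and 1 − η_e(t) are uniformly bounded on [0, ∞), i.e., the pose deviation between the robot end-effector and the god-object remains bounded (Theorem 1, statement 2). -/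
set_option maxRecDepth 8000

open Matrix

section SRBAux

lemma srb_hasDerivAt_dotProduct {n : ℕ} {u w : ℝ → Fin n → ℝ} {u' w' : Fin n → ℝ} {t : ℝ}
    (hu : HasDerivAt u u' t) (hw : HasDerivAt w w' t) :
    HasDerivAt (fun s => u s ⬝ᵥ w s) (u' ⬝ᵥ w t + u t ⬝ᵥ w') t := by
  have hu' := hasDerivAt_pi.mp hu
  have hw' := hasDerivAt_pi.mp hw
  have h : HasDerivAt (fun s => ∑ i : Fin n, u s i * w s i)
      (∑ i : Fin n, (u' i * w t i + u t i * w' i)) t :=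
    HasDerivAt.fun_sum fun i _ => (hu' i).mul (hw' i)
  simpa [dotProduct, Finset.sum_add_distrib] using h

lemma srb_hasDerivAt_mulVec {m n : ℕ} (M : Matrix (Fin m) (Fin n) ℝ) {w : ℝ → Fin n → ℝ}
    {w' : Fin n → ℝ} {t : ℝ} (hw : HasDerivAt w w' t) :
    HasDerivAt (fun s => M *ᵥ (w s)) (M *ᵥ w') t := by
  rw [hasDerivAt_pi]
  intro i
  have := srb_hasDerivAt_dotProduct (hasDerivAt_const t (M i)) hw
  simpa [mulVec] using this

lemma srb_dot_mulVec_comm {n : ℕ} (A : Matrix (Fin n) (Fin n) ℝ) (x y : Fin n → ℝ) :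
    x ⬝ᵥ A *ᵥ y = y ⬝ᵥ Aᵀ *ᵥ x := by
  rw [dotProduct_mulVec, ← mulVec_transpose, dotProduct_comm]

lemma srb_append_dotProduct (a b c d : Fin 3 → ℝ) :
    (Fin.append a b : Fin 6 → ℝ) ⬝ᵥ (Fin.append c d : Fin 6 → ℝ) = a ⬝ᵥ c + b ⬝ᵥ d := by
  show ∑ i : Fin 6, _ = _
  rw [Fin.sum_univ_six]
  show a 0 * c 0 + a 1 * c 1 + a 2 * c 2 + b 0 * d 0 + b 1 * d 1 + b 2 * d 2 = _
  simp [dotProduct, Fin.sum_univ_three]; ring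

lemma srb_dot_self_nonneg {n : ℕ} (x : Fin n → ℝ) : 0 ≤ x ⬝ᵥ x :=
  Finset.sum_nonneg fun _ _ => mul_self_nonneg _

lemma srb_real_herm_transpose {n : ℕ} {A : Matrix (Fin n) (Fin n) ℝ} (hA : A.IsHermitian) :
    Aᵀ = A := by
  ext i j
  have := congr_fun (congr_fun hA i) j
  simpa [conjTranspose_apply] using this

lemma srb_rayleigh_eq {n : ℕ} {A : Matrix (Fin n) (Fin n) ℝ} (hA : A.IsHermitian)
    (x : Fin n → ℝ) :
    ∃ y : Fin n → ℝ, x ⬝ᵥ A *ᵥ x = ∑ i, hA.eigenvalues i * (y i * y i) ∧ y ⬝ᵥ y = x ⬝ᵥ x := by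
  have hstar : ∀ B : Matrix (Fin n) (Fin n) ℝ, star B = Bᵀ := by
    intro B; ext i j; simp [Matrix.star_apply]
  set U : Matrix (Fin n) (Fin n) ℝ := (hA.eigenvectorUnitary : Matrix (Fin n) (Fin n) ℝ) with hUdef
  have hU : U * star U = 1 := Matrix.mem_unitaryGroup_iff.mp hA.eigenvectorUnitary.2
  refine ⟨(star U) *ᵥ x, ?_, ?_⟩
  · have hxy : ∀ z : Fin n → ℝ, x ⬝ᵥ U *ᵥ z = ((star U) *ᵥ x) ⬝ᵥ z := by
      intro z
      rw [srb_dot_mulVec_comm, ← hstar, dotProduct_comm]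
    conv_lhs => rw [hA.spectral_theorem, Unitary.conjStarAlgAut_apply]
    rw [← Matrix.mulVec_mulVec, ← Matrix.mulVec_mulVec]
    simp only [RCLike.ofReal_real_eq_id, Function.id_comp, ← hUdef]
    rw [hxy, dotProduct]
    congr 1; ext i
    rw [mulVec_diagonal]; ring
  · calc ((star U) *ᵥ x) ⬝ᵥ ((star U) *ᵥ x)
        = x ⬝ᵥ (star U)ᵀ *ᵥ ((star U) *ᵥ x) := srb_dot_mulVec_comm _ _ _
      _ = x ⬝ᵥ (U * star U) *ᵥ x := by
          rw [hstar, transpose_transpose, mulVec_mulVec]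
      _ = x ⬝ᵥ x := by rw [hU, one_mulVec]

lemma srb_rayleigh_le {n : ℕ} {A : Matrix (Fin n) (Fin n) ℝ} (hA : A.IsHermitian)
    (x : Fin n → ℝ) : x ⬝ᵥ A *ᵥ x ≤ (⨆ i, hA.eigenvalues i) * (x ⬝ᵥ x) := by
  obtain ⟨y, h1, h2⟩ := srb_rayleigh_eq hA x
  have hbdd : BddAbove (Set.range hA.eigenvalues) := Set.Finite.bddAbove (Set.finite_range _)
  calc x ⬝ᵥ A *ᵥ x = ∑ i, hA.eigenvalues i * (y i * y i) := h1
    _ ≤ ∑ i, (⨆ j, hA.eigenvalues j) * (y i * y i) :=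
        Finset.sum_le_sum fun i _ => mul_le_mul_of_nonneg_right (le_ciSup hbdd i) (mul_self_nonneg _)
    _ = (⨆ j, hA.eigenvalues j) * (y ⬝ᵥ y) := by rw [← Finset.mul_sum]; rfl
    _ = _ := by rw [h2]

lemma srb_rayleigh_ge {n : ℕ} {A : Matrix (Fin n) (Fin n) ℝ} (hA : A.IsHermitian)
    (x : Fin n → ℝ) : (⨅ i, hA.eigenvalues i) * (x ⬝ᵥ x) ≤ x ⬝ᵥ A *ᵥ x := by
  obtain ⟨y, h1, h2⟩ := srb_rayleigh_eq hA x
  have hbdd : BddBelow (Set.range hA.eigenvalues) := Set.Finite.bddBelow (Set.finite_range _)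
  calc (⨅ j, hA.eigenvalues j) * (x ⬝ᵥ x) = ∑ i, (⨅ j, hA.eigenvalues j) * (y i * y i) := by
        rw [← h2, ← Finset.mul_sum]; rfl
    _ ≤ ∑ i, hA.eigenvalues i * (y i * y i) :=
        Finset.sum_le_sum fun i _ => mul_le_mul_of_nonneg_right (ciInf_le hbdd i) (mul_self_nonneg _)
    _ = x ⬝ᵥ A *ᵥ x := h1.symm

lemma srb_quad_bound {n : ℕ} {D A : Matrix (Fin n) (Fin n) ℝ} (hD : D.PosDef)
    (hAT : Aᵀ = A) (hDA : D * A = 1) (x y : Fin n → ℝ) :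
    x ⬝ᵥ y - x ⬝ᵥ D *ᵥ x ≤ (1/4) * (y ⬝ᵥ A *ᵥ y) := by
  have hDT : Dᵀ = D := srb_real_herm_transpose hD.1
  set z : Fin n → ℝ := A *ᵥ y with hz
  have hDz : D *ᵥ z = y := by rw [hz, mulVec_mulVec, hDA, one_mulVec]
  set w : Fin n → ℝ := x - (1/2 : ℝ) • z with hw
  have h0 : 0 ≤ w ⬝ᵥ D *ᵥ w := by simpa using hD.posSemidef.dotProduct_mulVec_nonneg w
  have hzDx : z ⬝ᵥ D *ᵥ x = x ⬝ᵥ y := by rw [srb_dot_mulVec_comm, hDT, hDz, dotProduct_comm]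
  have hzy : z ⬝ᵥ y = y ⬝ᵥ A *ᵥ y := by rw [hz, dotProduct_comm]
  have hexp : w ⬝ᵥ D *ᵥ w
      = x ⬝ᵥ D *ᵥ x - x ⬝ᵥ y + (1/4) * (y ⬝ᵥ A *ᵥ y) := by
    rw [hw, mulVec_sub, mulVec_smul, hDz]
    simp only [sub_dotProduct, dotProduct_sub, smul_dotProduct, dotProduct_smul, smul_eq_mul,
      hzDx, hzy]
    ring
  linarith [h0, hexp]

end SRBAux


lemma srb_dot_expand1 {n : ℕ} (a b : Fin n → ℝ) (c : ℝ) :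
    (c • a - b) ⬝ᵥ a + a ⬝ᵥ (c • a - b) = 2 * c * (a ⬝ᵥ a) - 2 * (b ⬝ᵥ a) := by
  rw [sub_dotProduct, dotProduct_sub, smul_dotProduct,
    dotProduct_smul, dotProduct_comm a b]
  simp only [smul_eq_mul]
  ring

lemma srb_dot_expand2 {n : ℕ} (a b : Fin n → ℝ) (c : ℝ) :
    a ⬝ᵥ (c • a - b) = c * (a ⬝ᵥ a) - a ⬝ᵥ b := by
  rw [dotProduct_sub, dotProduct_smul]
  simp only [smul_eq_mul]


/-- for the closed-loop SRB system with storage function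
`V = (1/2) vᵀ M_d v + (1/2) k_p ‖p_e‖² + 2 k_o (1 − η_e)`, if additionally
`η_e(t) ≤ 1` for all `t` (so `V ≥ 0`) and the human force has bounded
energy `∫₀^∞ ‖F_h‖² dt = E < ∞`, then for all `t ≥ 0`,
`V(t) ≤ V(0) + (λ_max(D_d⁻¹)/4) E`; consequently `‖v‖`, `‖p_e‖` and
`1 − η_e` are uniformly bounded on `[0, ∞)` (Theorem 1, statement 2).
Squared Euclidean norms are written via dot products and `v = (ṗ, ω)`. -/
theorem storage_function_bounded
    (Md Dd : Matrix (Fin 6) (Fin 6) ℝ) (kp ko kr : ℝ) (f : ℝ → ℝ)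
    (Fh : ℝ → Fin 6 → ℝ)
    (p pg ω εe pdot : ℝ → Fin 3 → ℝ) (ηe : ℝ → ℝ)
    (Re : ℝ → Matrix (Fin 3) (Fin 3) ℝ)
    (v vdot : ℝ → Fin 6 → ℝ) (E : ℝ)
    (hMd : Md.PosDef) (hDd : Dd.PosDef)
    (hkp : 0 < kp) (hko : 0 < ko) (hkr : 0 < kr)
    (hf : ∀ t : ℝ, f t ∈ Set.Icc (0:ℝ) 1)
    (hRe : ∀ t : ℝ, (Re t)ᵀ * Re t = 1)
    (hRedet : ∀ t : ℝ, (Re t).det = 1)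
    -- `v = (ṗ, ω)`:
    (hp : ∀ t : ℝ, HasDerivAt p (pdot t) t)
    (hv : ∀ t : ℝ, v t = Fin.append (pdot t) (ω t))
    (hvdot : ∀ t : ℝ, HasDerivAt v (vdot t) t)
    -- (i) admittance model with `u_c = (k_p p_e, k_o R_eᵀ ε_e)`:
    (hadm : ∀ t : ℝ,
      Md.mulVec (vdot t) + Dd.mulVec (v t) =
        Fh t + Fin.append (kp • (pg t - p t)) (ko • (Re t)ᵀ.mulVec (εe t)))
    -- (ii) god-object dynamics:
    (hpg : ∀ t : ℝ, HasDerivAt pg ((-(kr * f t)) • (pg t - p t)) t)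
    -- (iii) quaternion-error kinematics, with `ω_g = −k_r f ε_e`:
    (hηe : ∀ t : ℝ, HasDerivAt ηe
      (-(1 / 2) * (εe t ⬝ᵥ ((-(kr * f t)) • εe t - (Re t).mulVec (ω t)))) t)
    -- unit-quaternion real part bound, so that `V ≥ 0`:
    (hηe1 : ∀ t : ℝ, ηe t ≤ 1)
    -- bounded energy of the human force:
    (hFint : MeasureTheory.IntegrableOn (fun t : ℝ => Fh t ⬝ᵥ Fh t)
      (Set.Ioi (0:ℝ)))
    (hE : ∫ t in Set.Ioi (0:ℝ), (Fh t ⬝ᵥ Fh t) = E) :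
    (∀ t : ℝ, 0 ≤ t →
        (1 / 2) * (v t ⬝ᵥ Md.mulVec (v t)) +
            (1 / 2) * kp * ((pg t - p t) ⬝ᵥ (pg t - p t)) +
            2 * ko * (1 - ηe t) ≤
          ((1 / 2) * (v 0 ⬝ᵥ Md.mulVec (v 0)) +
              (1 / 2) * kp * ((pg 0 - p 0) ⬝ᵥ (pg 0 - p 0)) +
              2 * ko * (1 - ηe 0)) +
            ((⨆ i, hDd.inv.1.eigenvalues i) / 4) * E) ∧
      ∃ C : ℝ, ∀ t : ℝ, 0 ≤ t →
        v t ⬝ᵥ v t ≤ C ∧ (pg t - p t) ⬝ᵥ (pg t - p t) ≤ C ∧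
          1 - ηe t ≤ C := by
  obtain ⟨L, hLdef⟩ : ∃ L : ℝ, L = ⨆ i, hDd.inv.1.eigenvalues i := ⟨_, rfl⟩
  rw [← hLdef]
  have hMdT : Mdᵀ = Md := srb_real_herm_transpose hMd.1
  have hpeD : ∀ s : ℝ, HasDerivAt (fun r => pg r - p r)
      ((-(kr * f s)) • (pg s - p s) - pdot s) s := fun s => (hpg s).sub (hp s)
  -- derivative of the storage function
  have hVD : ∀ s : ℝ, HasDerivAt
      (fun r => (1 / 2) * (v r ⬝ᵥ Md *ᵥ v r) +
        (1 / 2) * kp * ((pg r - p r) ⬝ᵥ (pg r - p r)) + 2 * ko * (1 - ηe r))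
      (v s ⬝ᵥ Fh s - v s ⬝ᵥ Dd *ᵥ v s
        - kr * f s * (kp * ((pg s - p s) ⬝ᵥ (pg s - p s)) + ko * (εe s ⬝ᵥ εe s))) s := by
    intro s
    have d1 : HasDerivAt (fun r => v r ⬝ᵥ Md *ᵥ v r)
        (vdot s ⬝ᵥ Md *ᵥ v s + v s ⬝ᵥ Md *ᵥ vdot s) s :=
      srb_hasDerivAt_dotProduct (hvdot s) (srb_hasDerivAt_mulVec Md (hvdot s))
    have d2 : HasDerivAt (fun r => (pg r - p r) ⬝ᵥ (pg r - p r))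
        (((-(kr * f s)) • (pg s - p s) - pdot s) ⬝ᵥ (pg s - p s) +
          (pg s - p s) ⬝ᵥ ((-(kr * f s)) • (pg s - p s) - pdot s)) s :=
      srb_hasDerivAt_dotProduct (hpeD s) (hpeD s)
    have d3 : HasDerivAt (fun r => (1:ℝ) - ηe r)
        (0 - (-(1 / 2) * (εe s ⬝ᵥ ((-(kr * f s)) • εe s - (Re s).mulVec (ω s))))) s :=
      (hasDerivAt_const s (1:ℝ)).sub (hηe s)
    have dV := ((d1.const_mul ((1:ℝ)/2)).add (d2.const_mul ((1/2)*kp))).add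
      (d3.const_mul (2*ko))
    have hMv : v s ⬝ᵥ Md *ᵥ vdot s =
        v s ⬝ᵥ Fh s + (kp * (pdot s ⬝ᵥ (pg s - p s)) + ko * (εe s ⬝ᵥ Re s *ᵥ ω s))
          - v s ⬝ᵥ Dd *ᵥ v s := by
      have e2 : Md *ᵥ vdot s =
          Fh s + Fin.append (kp • (pg s - p s)) (ko • (Re s)ᵀ *ᵥ εe s) - Dd *ᵥ v s :=
        eq_sub_of_add_eq (hadm s)
      rw [e2, dotProduct_sub, dotProduct_add]
      congr 2
      rw [hv s, srb_append_dotProduct, dotProduct_smul, dotProduct_smul, smul_eq_mul, smul_eq_mul]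
      congr 2
      rw [srb_dot_mulVec_comm, transpose_transpose]
    have hsym : vdot s ⬝ᵥ Md *ᵥ v s = v s ⬝ᵥ Md *ᵥ vdot s := by
      rw [srb_dot_mulVec_comm, hMdT]
    have hd2 := srb_dot_expand1 (pg s - p s) (pdot s) (-(kr * f s))
    have hd3 := srb_dot_expand2 (εe s) ((Re s).mulVec (ω s)) (-(kr * f s))
    have hWeq : (1:ℝ)/2 * (vdot s ⬝ᵥ Md *ᵥ v s + v s ⬝ᵥ Md *ᵥ vdot s) +
        (1/2)*kp * (((-(kr * f s)) • (pg s - p s) - pdot s) ⬝ᵥ (pg s - p s) +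
          (pg s - p s) ⬝ᵥ ((-(kr * f s)) • (pg s - p s) - pdot s)) +
        (2*ko) * (0 - (-(1 / 2) * (εe s ⬝ᵥ ((-(kr * f s)) • εe s - (Re s).mulVec (ω s)))))
        = v s ⬝ᵥ Fh s - v s ⬝ᵥ Dd *ᵥ v s
          - kr * f s * (kp * ((pg s - p s) ⬝ᵥ (pg s - p s)) + ko * (εe s ⬝ᵥ εe s)) := by
      rw [hsym, hMv, hd2, hd3]
      ring
    rw [hWeq] at dV
    exact dV
  have hLpos : 0 < L := by
    have h0 : 0 < hDd.inv.1.eigenvalues 0 := hDd.inv.eigenvalues_pos 0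
    have h1 : hDd.inv.1.eigenvalues 0 ≤ L := by
      rw [hLdef]; exact le_ciSup (Set.Finite.bddAbove (Set.finite_range _)) 0
    linarith
  -- pointwise bound on the derivative
  have hL4 : ∀ s : ℝ, v s ⬝ᵥ Fh s - v s ⬝ᵥ Dd *ᵥ v s
        - kr * f s * (kp * ((pg s - p s) ⬝ᵥ (pg s - p s)) + ko * (εe s ⬝ᵥ εe s))
      ≤ L / 4 * (Fh s ⬝ᵥ Fh s) := by
    intro s
    have h2 := srb_rayleigh_le hDd.inv.1 (Fh s)
    rw [← hLdef] at h2
    have h1 := srb_quad_bound hDd (srb_real_herm_transpose hDd.inv.1)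
      (by rw [Matrix.mul_nonsing_inv]; exact isUnit_iff_ne_zero.mpr hDd.det_pos.ne')
      (v s) (Fh s)
    have h3 : 0 ≤ kr * f s * (kp * ((pg s - p s) ⬝ᵥ (pg s - p s)) + ko * (εe s ⬝ᵥ εe s)) := by
      have hf0 := (hf s).1
      have c1 := srb_dot_self_nonneg (pg s - p s)
      have c2 := srb_dot_self_nonneg (εe s)
      positivity
    have h4 : (1/4 : ℝ) * (Fh s ⬝ᵥ Dd⁻¹ *ᵥ Fh s) ≤ L / 4 * (Fh s ⬝ᵥ Fh s) := by
      have := mul_le_mul_of_nonneg_left h2 (by norm_num : (0:ℝ) ≤ 1/4)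
      linarith
    linarith
  have hEnn : 0 ≤ E := by
    rw [← hE]
    exact MeasureTheory.setIntegral_nonneg measurableSet_Ioi fun x _ => srb_dot_self_nonneg _
  -- main energy bound, in explicit form
  have hmain : ∀ t : ℝ, 0 ≤ t →
      (1 / 2) * (v t ⬝ᵥ Md *ᵥ v t) + (1 / 2) * kp * ((pg t - p t) ⬝ᵥ (pg t - p t)) +
          2 * ko * (1 - ηe t)
        ≤ ((1 / 2) * (v 0 ⬝ᵥ Md *ᵥ v 0) + (1 / 2) * kp * ((pg 0 - p 0) ⬝ᵥ (pg 0 - p 0)) +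
            2 * ko * (1 - ηe 0)) + L / 4 * E := by
    intro t ht
    have hcont : ContinuousOn
        (fun r => (1 / 2) * (v r ⬝ᵥ Md *ᵥ v r) +
          (1 / 2) * kp * ((pg r - p r) ⬝ᵥ (pg r - p r)) + 2 * ko * (1 - ηe r))
        (Set.Icc 0 t) := fun x _ => (hVD x).continuousAt.continuousWithinAt
    have hint1 : MeasureTheory.IntegrableOn (fun s => Fh s ⬝ᵥ Fh s) (Set.Ioc 0 t) :=
      hFint.mono_set Set.Ioc_subset_Ioi_self
    have hint2 : MeasureTheory.IntegrableOn (fun s => Fh s ⬝ᵥ Fh s) (Set.Icc 0 t) :=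
      (integrableOn_Icc_iff_integrableOn_Ioc).mpr hint1
    have φint : MeasureTheory.IntegrableOn (fun s => L / 4 * (Fh s ⬝ᵥ Fh s))
        (Set.Icc 0 t) := hint2.const_mul _
    have key := intervalIntegral.sub_le_integral_of_hasDeriv_right_of_le ht hcont
      (fun x _ => (hVD x).hasDerivWithinAt) φint (fun x _ => hL4 x)
    have hIeq : (∫ y in (0:ℝ)..t, L / 4 * (Fh y ⬝ᵥ Fh y)) =
        L / 4 * ∫ y in (0:ℝ)..t, (Fh y ⬝ᵥ Fh y) :=
      intervalIntegral.integral_const_mul _ _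
    have hIle : (∫ y in (0:ℝ)..t, (Fh y ⬝ᵥ Fh y)) ≤ E := by
      rw [intervalIntegral.integral_of_le ht, ← hE]
      refine MeasureTheory.setIntegral_mono_set hFint ?_ ?_
      · exact MeasureTheory.ae_of_all _ fun x => srb_dot_self_nonneg _
      · exact Filter.Eventually.of_forall fun x hx => Set.Ioc_subset_Ioi_self hx
    have h5 : L / 4 * (∫ y in (0:ℝ)..t, (Fh y ⬝ᵥ Fh y)) ≤ L / 4 * E :=
      mul_le_mul_of_nonneg_left hIle (div_nonneg hLpos.le (by norm_num))
    rw [hIeq] at key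
    linarith
  refine ⟨fun t ht => hmain t ht, ?_⟩
  -- uniform bounds
  obtain ⟨B, hBdef⟩ : ∃ B : ℝ,
      B = ((1 / 2) * (v 0 ⬝ᵥ Md *ᵥ v 0) + (1 / 2) * kp * ((pg 0 - p 0) ⬝ᵥ (pg 0 - p 0)) +
        2 * ko * (1 - ηe 0)) + L / 4 * E := ⟨_, rfl⟩
  rw [← hBdef] at hmain
  have hB0 : 0 ≤ B := by
    have c1 : 0 ≤ v 0 ⬝ᵥ Md *ᵥ v 0 := by simpa using hMd.posSemidef.dotProduct_mulVec_nonneg (v 0)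
    have c2 := srb_dot_self_nonneg (pg 0 - p 0)
    have c3 : 0 ≤ 1 - ηe 0 := by linarith [hηe1 0]
    have c4 : 0 ≤ L / 4 * E := mul_nonneg (div_nonneg hLpos.le (by norm_num)) hEnn
    have d1 : (0:ℝ) ≤ (1 / 2) * (v 0 ⬝ᵥ Md *ᵥ v 0) := by positivity
    have d2 : (0:ℝ) ≤ (1 / 2) * kp * ((pg 0 - p 0) ⬝ᵥ (pg 0 - p 0)) := by positivity
    have d3 : (0:ℝ) ≤ 2 * ko * (1 - ηe 0) := by positivity
    rw [hBdef]
    linarith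
  obtain ⟨μ, hμdef⟩ : ∃ μ : ℝ, μ = ⨅ i, hMd.1.eigenvalues i := ⟨_, rfl⟩
  have hμpos : 0 < μ := by
    obtain ⟨i0, -, hi0⟩ := Finset.exists_min_image Finset.univ hMd.1.eigenvalues
      ⟨0, Finset.mem_univ 0⟩
    have h1 : (0:ℝ) < hMd.1.eigenvalues i0 := hMd.eigenvalues_pos i0
    have h2 : hMd.1.eigenvalues i0 ≤ μ := by
      rw [hμdef]; exact le_ciInf fun j => hi0 j (Finset.mem_univ j)
    linarith
  refine ⟨2 * B / μ + 2 * B / kp + B / (2 * ko), fun t ht => ?_⟩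
  have hsum := hmain t ht
  have c1 : 0 ≤ v t ⬝ᵥ Md *ᵥ v t := by simpa using hMd.posSemidef.dotProduct_mulVec_nonneg (v t)
  have c2 := srb_dot_self_nonneg (pg t - p t)
  have c3 : 0 ≤ 1 - ηe t := by linarith [hηe1 t]
  have t1 : (0:ℝ) ≤ (1 / 2) * (v t ⬝ᵥ Md *ᵥ v t) := by positivity
  have t2 : (0:ℝ) ≤ (1 / 2) * kp * ((pg t - p t) ⬝ᵥ (pg t - p t)) := by positivity
  have t3 : (0:ℝ) ≤ 2 * ko * (1 - ηe t) := by positivity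
  have b1 : v t ⬝ᵥ Md *ᵥ v t ≤ 2 * B := by linarith
  have b2 : (pg t - p t) ⬝ᵥ (pg t - p t) ≤ 2 * B / kp := by
    rw [le_div_iff₀ hkp]; nlinarith
  have b3 : 1 - ηe t ≤ B / (2 * ko) := by
    rw [le_div_iff₀ (by positivity : (0:ℝ) < 2 * ko)]; nlinarith
  have bv : v t ⬝ᵥ v t ≤ 2 * B / μ := by
    have hr : μ * (v t ⬝ᵥ v t) ≤ v t ⬝ᵥ Md *ᵥ v t := by
      rw [hμdef]; exact srb_rayleigh_ge hMd.1 (v t)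
    rw [le_div_iff₀ hμpos]; nlinarith
  have hq1 : 0 ≤ 2 * B / μ := by positivity
  have hq2 : 0 ≤ 2 * B / kp := by positivity
  have hq3 : 0 ≤ B / (2 * ko) := by positivity
  exact ⟨by linarith, by linarith, by linarith⟩
end
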